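/- For every y₀ with 0 < y₀ < 1, the improper integral 4 ∫₀^{1 − √(1 − y₀²)} dx / √(y₀² + x² − 2x) converges and equals 2 ln((1 + y₀)/(1 − y₀)). -/

import Mathlib

/-- For every `y₀` with `0 < y₀ < 1`, the improper integral
`4 ∫₀^{1 − √(1 − y₀²)} dx / √(y₀² + x² − 2x)` converges and equals
`2 ln((1 + y₀)/(1 − y₀))`.  (This is the period of the periodic orbit of the
unperturbed linearized rocking block through `(0, y₀)`.) -/
theorem period_linearized_rocking_block (y₀ : ℝ) (h0 : 0 < y₀) (h1 : y₀ < 1) :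
    IntervalIntegrable (fun x : ℝ => 1 / Real.sqrt (y₀ ^ 2 + x ^ 2 - 2 * x))
      MeasureTheory.volume 0 (1 - Real.sqrt (1 - y₀ ^ 2)) ∧
    4 * ∫ x in (0:ℝ)..(1 - Real.sqrt (1 - y₀ ^ 2)),
        1 / Real.sqrt (y₀ ^ 2 + x ^ 2 - 2 * x)
      = 2 * Real.log ((1 + y₀) / (1 - y₀)) := by
  set a : ℝ := Real.sqrt (1 - y₀ ^ 2) with ha_def
  have hy2 : (0:ℝ) ≤ 1 - y₀ ^ 2 := by nlinarith
  have ha2 : a ^ 2 = 1 - y₀ ^ 2 := Real.sq_sqrt hy2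
  have ha0 : 0 < a := Real.sqrt_pos.2 (by nlinarith)
  have ha1 : a < 1 := by nlinarith [ha2, ha0]
  set b : ℝ := 1 - a with hb_def
  have hb0 : 0 < b := by simp [hb_def]; linarith
  have hb1 : b < 1 := by simp [hb_def]; linarith
  have hrw : ∀ x : ℝ, y₀ ^ 2 + x ^ 2 - 2 * x = (1 - x) ^ 2 - a ^ 2 := by
    intro x; rw [ha2]; ring
  -- integrability
  have hint : IntervalIntegrable (fun x : ℝ => 1 / Real.sqrt (y₀ ^ 2 + x ^ 2 - 2 * x))
      MeasureTheory.volume 0 b := by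
    rw [intervalIntegrable_iff_integrableOn_Ioc_of_le hb0.le]
    have hg : MeasureTheory.IntegrableOn
        (fun x : ℝ => (Real.sqrt a)⁻¹ * (b - x) ^ (-(1/2) : ℝ)) (Set.Ioc 0 b) := by
      have h1 : IntervalIntegrable (fun x : ℝ => x ^ (-(1/2) : ℝ))
          MeasureTheory.volume 0 b := intervalIntegral.intervalIntegrable_rpow' (by norm_num)
      have h2 := (h1.comp_sub_left b).symm
      simp only [sub_zero, sub_self] at h2
      have h3 := h2.const_mul (Real.sqrt a)⁻¹
      rw [intervalIntegrable_iff_integrableOn_Ioc_of_le hb0.le] at h3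
      exact h3
    refine hg.mono' ?_ ?_
    · have hm : Measurable fun x : ℝ => (Real.sqrt (y₀ ^ 2 + x ^ 2 - 2 * x))⁻¹ :=
        (Real.continuous_sqrt.comp (by continuity)).measurable.inv
      simpa [one_div] using hm.aestronglyMeasurable
    · rw [MeasureTheory.ae_restrict_iff' measurableSet_Ioc]
      filter_upwards with x hx
      obtain ⟨hx0, hxb⟩ := hx
      rw [Real.norm_eq_abs, abs_of_nonneg (by positivity)]
      have key : Real.sqrt a * Real.sqrt (b - x) ≤ Real.sqrt (y₀ ^ 2 + x ^ 2 - 2 * x) := by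
        rw [← Real.sqrt_mul ha0.le, hrw]
        apply Real.sqrt_le_sqrt
        have h1x : a ≤ 1 - x := by simp [hb_def] at hxb ⊢; linarith
        nlinarith [hxb, h1x, ha0]
      have hbx : 0 ≤ b - x := by linarith
      rw [Real.rpow_neg hbx, ← Real.sqrt_eq_rpow, one_div, ← mul_inv]
      rcases eq_or_lt_of_le hbx with h | h
      · have hxb' : x = b := by linarith
        rw [hrw, hxb']
        simp [hb_def]
      · exact inv_anti₀ (by positivity) key
  refine ⟨hint, ?_⟩
  -- FTC
  set F : ℝ → ℝ := fun x => -Real.log (1 - x + Real.sqrt ((1 - x) ^ 2 - a ^ 2)) with hF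
  have hgpos : ∀ x ∈ Set.Icc (0:ℝ) b, 0 < 1 - x + Real.sqrt ((1 - x) ^ 2 - a ^ 2) := by
    intro x hx
    have : 0 < 1 - x := by linarith [hx.2, hb1]
    positivity
  have hcont : ContinuousOn F (Set.Icc 0 b) := by
    apply ContinuousOn.neg
    apply ContinuousOn.log
    · fun_prop
    · intro x hx; exact (hgpos x hx).ne'
  have hderiv : ∀ x ∈ Set.Ioo (0:ℝ) b,
      HasDerivAt F (1 / Real.sqrt (y₀ ^ 2 + x ^ 2 - 2 * x)) x := by
    intro x hx
    have h1x : a < 1 - x := by simp [hb_def] at hx ⊢; linarith [hx.2]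
    have hv : 0 < (1 - x) ^ 2 - a ^ 2 := by nlinarith [ha0]
    set s : ℝ := Real.sqrt ((1 - x) ^ 2 - a ^ 2) with hs_def
    have hs : 0 < s := Real.sqrt_pos.2 hv
    have hs2 : s ^ 2 = (1 - x) ^ 2 - a ^ 2 := Real.sq_sqrt hv.le
    have d0 : HasDerivAt (fun x : ℝ => 1 - x) (-1) x := by
      simpa using (hasDerivAt_id x).const_sub 1
    have d1 : HasDerivAt (fun x : ℝ => (1 - x) ^ 2 - a ^ 2) (2 * (1 - x) ^ 1 * (-1)) x :=
      (d0.pow 2).sub_const _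
    have d2 : HasDerivAt (fun x : ℝ => Real.sqrt ((1 - x) ^ 2 - a ^ 2))
        ((2 * (1 - x) ^ 1 * (-1)) / (2 * s)) x := d1.sqrt hv.ne'
    have d3 := (d0.add d2).log (hgpos x ⟨hx.1.le, hx.2.le⟩).ne'
    have := d3.neg
    convert this using 1
    case e'_4 => rfl
    case e'_5 => rfl
    case e'_8 => rfl
    rw [hrw]
    have h1x0 : 0 < 1 - x := lt_trans ha0 h1x
    have hg0 : 0 < 1 - x + s := by linarith [hs.le]
    simp only [Pi.add_apply, ← hs_def]
    field_simp
    nlinarith [hs2, hs, hg0]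
  have hFTC :
      ∫ x in (0:ℝ)..b, 1 / Real.sqrt (y₀ ^ 2 + x ^ 2 - 2 * x) = F b - F 0 :=
    intervalIntegral.integral_eq_sub_of_hasDeriv_right_of_le hb0.le hcont
      (fun x hx => ((hderiv x hx).hasDerivWithinAt)) hint
  rw [hFTC]
  have hFb : F b = -Real.log a := by
    have : (1 - b) ^ 2 - a ^ 2 = 0 := by simp [hb_def]
    simp [hF, this, hb_def]
  have hF0 : F 0 = -Real.log (1 + y₀) := by
    have h1a : (1:ℝ) - a ^ 2 = y₀ ^ 2 := by rw [ha2]; ring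
    simp [hF, h1a, Real.sqrt_sq h0.le]
  rw [hFb, hF0]
  have hla : Real.log a = (Real.log (1 - y₀) + Real.log (1 + y₀)) / 2 := by
    rw [ha_def, Real.log_sqrt hy2]
    congr 1
    rw [show 1 - y₀ ^ 2 = (1 - y₀) * (1 + y₀) by ring,
      Real.log_mul (by linarith) (by linarith)]
  rw [Real.log_div (by linarith) (by linarith)]
  rw [hla]; ring
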